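/- For every finite set of guides G ⊆ Σ₀·Σ*·Σ₀ and every string u ∈ Σ*, the set L^u_{i/d} = { v ∈ Σ* | u ⇒_{i/d}* v } of strings obtainable from u by guided insertion/deletion steps is finite. -/

import Mathlib

/-- The homomorphism `π` erasing the distinguished symbol `0` (modelled as `none`). -/
def eraseZeros {α₀ : Type} (u : List (Option α₀)) : List α₀ := u.filterMap id

/-- A guided insertion/deletion step: a substring `y ∈ Σ₀·Σ*·Σ₀` of `u` with
`π(y) = π(g)` for some guide `g ∈ G` is replaced by `g`. -/
def IdStep {α₀ : Type} (G : Set (List (Option α₀))) (u v : List (Option α₀)) : Prop :=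
  ∃ g ∈ G, ∃ x y z : List (Option α₀),
    u = x ++ y ++ z ∧ v = x ++ g ++ z ∧
    (∃ (a b : α₀) (m : List (Option α₀)), y = some a :: m ++ [some b]) ∧
    eraseZeros y = eraseZeros g

private lemma infix_split {α : Type*} {l₁ l₂ r : List α} {a : α}
    (h : r <:+: l₁ ++ a :: l₂) (ha : a ∉ r) : r <:+: l₁ ∨ r <:+: l₂ := by
  obtain ⟨s, t, hst⟩ := h
  rcases le_or_gt (s.length + r.length) l₁.length with h1 | h1
  · left
    have h2 : s ++ r <+: l₁ ++ a :: l₂ := ⟨t, by simpa [List.append_assoc] using hst⟩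
    have hpre : s ++ r <+: l₁ :=
      List.prefix_of_prefix_length_le h2 (List.prefix_append _ _) (by simpa using h1)
    exact List.IsInfix.trans (show r <:+: s ++ r from ⟨s, [], by simp⟩) hpre.isInfix
  · rcases le_or_gt s.length l₁.length with h2 | h2
    · exfalso
      apply ha
      have e1 : (s ++ r ++ t)[l₁.length]? = some a := by
        rw [hst]
        simp [List.getElem?_append_right (le_refl l₁.length)]
      rw [List.append_assoc, List.getElem?_append_right h2,
        List.getElem?_append_left (by omega : l₁.length - s.length < r.length)] at e1
      exact List.mem_of_getElem? e1
    · right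
      have h3 : r ++ t <:+ l₁ ++ a :: l₂ := ⟨s, by simpa [List.append_assoc] using hst⟩
      have h4 : l₂ <:+ l₁ ++ a :: l₂ := ⟨l₁ ++ [a], by simp⟩
      have hlen : (r ++ t).length ≤ l₂.length := by
        have := congrArg List.length hst
        simp at this ⊢
        omega
      have h5 : r ++ t <:+ l₂ := by
        have h6 := List.prefix_of_prefix_length_le
          (l₁ := (r ++ t).reverse) (l₂ := l₂.reverse) (l₃ := (l₁ ++ a :: l₂).reverse)
          (by simpa using h3.reverse) (by simpa using h4.reverse)
          (by simp only [List.length_reverse]; exact hlen)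
        simpa using h6.reverse
      exact ((show r <+: r ++ t from ⟨t, rfl⟩).isInfix).trans h5.isInfix

private lemma length_le_of_no_run {α₀ : Type} (M : ℕ) :
    ∀ (v : List (Option α₀)) (c : ℕ),
      ¬ (List.replicate (c + 1) (none : Option α₀) <+: v) →
      ¬ (List.replicate (M + 1) (none : Option α₀) <:+: v) →
      v.length ≤ (eraseZeros v).length * (M + 1) + c := by
  intro v
  induction v with
  | nil => intro c _ _; simp [eraseZeros]
  | cons o v' ih =>
    intro c hpre hinf
    match o with
    | some a =>
      have hpre' : ¬ (List.replicate (M + 1) (none : Option α₀) <+: v') := by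
        intro hp
        exact hinf ((hp.isInfix).trans (show v' <:+: some a :: v' from ⟨[some a], [], by simp⟩))
      have hinf' : ¬ (List.replicate (M + 1) (none : Option α₀) <:+: v') := by
        intro hp
        exact hinf (hp.trans (show v' <:+: some a :: v' from ⟨[some a], [], by simp⟩))
      have := ih M hpre' hinf'
      have he : eraseZeros (some a :: v') = a :: eraseZeros v' := by
        simp [eraseZeros]
      rw [he]
      simp only [List.length_cons]
      nlinarith [this]
    | none =>
      match c with
      | 0 =>
        exact absurd (show List.replicate 1 (none : Option α₀) <+: none :: v' by
          simp [List.replicate]) hpre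
      | c' + 1 =>
        have hpre' : ¬ (List.replicate (c' + 1) (none : Option α₀) <+: v') := by
          intro hp
          apply hpre
          rw [List.replicate_succ]
          exact (List.cons_prefix_cons).2 ⟨rfl, hp⟩
        have hinf' : ¬ (List.replicate (M + 1) (none : Option α₀) <:+: v') := by
          intro hp
          exact hinf (hp.trans (show v' <:+: none :: v' from ⟨[none], [], by simp⟩))
        have := ih c' hpre' hinf'
        have he : eraseZeros (none :: v') = eraseZeros v' := by simp [eraseZeros]
        rw [he]
        simp only [List.length_cons]
        omega

/-- For every finite set of guides `G ⊆ Σ₀·Σ*·Σ₀` and every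
string `u`, the set `L^u_{i/d} = { v | u ⇒_{i/d}* v }` is finite. -/
theorem insertion_deletion_finitely_many_rewrites
    {α₀ : Type} [Fintype α₀] (G : Set (List (Option α₀))) (hGfin : G.Finite)
    (hGform : ∀ g ∈ G, ∃ (a b : α₀) (m : List (Option α₀)), g = some a :: m ++ [some b])
    (u : List (Option α₀)) :
    Set.Finite {v : List (Option α₀) | Relation.ReflTransGen (IdStep G) u v} := by
  classical
  set M : ℕ := u.length + hGfin.toFinset.sup List.length with hM
  have hMu : u.length ≤ M := Nat.le_add_right _ _
  have hMg : ∀ g ∈ G, g.length ≤ M := by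
    intro g hg
    have : g ∈ hGfin.toFinset := hGfin.mem_toFinset.2 hg
    exact le_trans (Finset.le_sup (f := List.length) this) (Nat.le_add_left _ _)
  -- invariant
  have key : ∀ v, Relation.ReflTransGen (IdStep G) u v →
      eraseZeros v = eraseZeros u ∧
      ¬ (List.replicate (M + 1) (none : Option α₀) <:+: v) := by
    intro v h
    induction h with
    | refl =>
      refine ⟨rfl, fun hinf => ?_⟩
      have := hinf.length_le
      simp at this
      omega
    | tail _ hstep ih =>
      obtain ⟨ihe, ihr⟩ := ih
      obtain ⟨g, hg, x, y, z, hv, hw, _, heq⟩ := hstep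
      constructor
      · rw [hw]
        have : eraseZeros (x ++ g ++ z) = eraseZeros (x ++ y ++ z) := by
          simp [eraseZeros, List.filterMap_append]
          rw [show (g.filterMap (fun x => x) : List α₀) = y.filterMap (fun x => x) from
            (by simpa [eraseZeros] using heq.symm)]
        rw [this, ← hv, ihe]
      · intro hinf
        obtain ⟨a, b, m, hgform⟩ := hGform g hg
        rw [hw, hgform] at hinf
        have hnone : (some a : Option α₀) ∉ List.replicate (M + 1) (none : Option α₀) := by
          intro hmem
          exact (Option.some_ne_none a) (List.eq_of_mem_replicate hmem)
        have h1 : (List.replicate (M + 1) (none : Option α₀)) <:+: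
            x ++ (some a) :: (m ++ [some b] ++ z) := by
          simpa [List.append_assoc] using hinf
        rcases infix_split h1 hnone with hx | hrest
        · exact ihr (hx.trans (show x <:+: x ++ y ++ z from
            ⟨[], y ++ z, by simp⟩) |>.trans (by rw [← hv]))
        · have hnb : (some b : Option α₀) ∉ List.replicate (M + 1) (none : Option α₀) := by
            intro hmem
            exact (Option.some_ne_none b) (List.eq_of_mem_replicate hmem)
          have h2 : (List.replicate (M + 1) (none : Option α₀)) <:+: m ++ (some b) :: z := by
            simpa [List.append_assoc] using hrest
          rcases infix_split h2 hnb with hm | hz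
          · have hlen := hm.length_le
            have hglen : g.length ≤ M := hMg g hg
            rw [hgform] at hglen
            simp at hlen hglen
            omega
          · exact ihr (hz.trans (show z <:+: x ++ y ++ z from ⟨x ++ y, [], by simp⟩)
              |>.trans (by rw [← hv]))
  have hsub : {v : List (Option α₀) | Relation.ReflTransGen (IdStep G) u v} ⊆
      {v : List (Option α₀) | v.length ≤ (eraseZeros u).length * (M + 1) + M} := by
    intro v hv
    obtain ⟨he, hr⟩ := key v hv
    have hpre : ¬ (List.replicate (M + 1) (none : Option α₀) <+: v) :=
      fun hp => hr hp.isInfix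
    have := length_le_of_no_run M v M hpre hr
    rw [he] at this
    exact this
  exact (List.finite_length_le (Option α₀) _).subset hsub
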